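/- Let S > 0 and r > 0 with S < 4r. Then there exists a real number α > √S such that 2α²/r > 1 and, for every x with 1/2 ≤ x < 1, the inequality (2x−1)·|(1 − 2α²/r)·x + 2α²/r| < α²/S holds. -/
import Mathlib


open Real

theorem barrier_inequality (S r : ℝ) (hS : 0 < S) (hr : 0 < r) (hSr : S < 4 * r) :
    ∃ α : ℝ, Real.sqrt S < α ∧ 1 < 2 * α ^ 2 / r ∧
      ∀ x : ℝ, 1 / 2 ≤ x → x < 1 →
        (2 * x - 1) * |(1 - 2 * α ^ 2 / r) * x + 2 * α ^ 2 / r| < α ^ 2 / S := by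
  have h4 : 0 < 4 * r - S := by linarith
  obtain ⟨B, hBdef⟩ : ∃ b : ℝ, b = 2 + 2 * S / r + 8 * S / (4 * r - S) := ⟨_, rfl⟩
  have h1 : (0:ℝ) < 2 * S / r := by positivity
  have h2 : (0:ℝ) < 8 * S / (4 * r - S) := by positivity
  have hB2 : 2 < B := by rw [hBdef]; linarith
  have hc1 : 2 * S / r * r = 2 * S := div_mul_cancel₀ _ (ne_of_gt hr)
  have hc2 : 8 * S / (4 * r - S) * (4 * r - S) = 8 * S := div_mul_cancel₀ _ (ne_of_gt h4)
  have hSB : S < B * r / 2 := by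
    have : 2 * S / r < B := by rw [hBdef]; linarith
    nlinarith
  have hBS : 8 * S < B * (4 * r - S) := by
    have h : 8 * S / (4 * r - S) < B := by rw [hBdef]; linarith
    have := mul_lt_mul_of_pos_right h h4
    rw [hc2] at this; exact this
  have hBr2 : 0 ≤ B * r / 2 := by positivity
  refine ⟨Real.sqrt (B * r / 2), ?_, ?_, ?_⟩
  · exact Real.sqrt_lt_sqrt hS.le hSB
  · rw [Real.sq_sqrt hBr2]
    rw [lt_div_iff₀ hr]
    nlinarith
  · intro x hx1 hx2
    rw [Real.sq_sqrt hBr2]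
    have hA : 2 * (B * r / 2) / r = B := by field_simp
    rw [hA]
    have hpos : 0 ≤ (1 - B) * x + B := by nlinarith
    rw [abs_of_nonneg hpos]
    rw [lt_div_iff₀ hS]
    have hB1 : (0:ℝ) < B - 1 := by linarith
    have key : (B - 1) * ((1 + B / 8) - (2 * x - 1) * ((1 - B) * x + B)) =
        ((4 * (B - 1) * (1 - x) - (B - 3)) ^ 2 + 5 * B - 9) / 8 := by ring
    have h0 : 0 ≤ ((4 * (B - 1) * (1 - x) - (B - 3)) ^ 2 + 5 * B - 9) / 8 := by
      have := sq_nonneg (4 * (B - 1) * (1 - x) - (B - 3)); linarith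
    have hD : 0 ≤ (1 + B / 8) - (2 * x - 1) * ((1 - B) * x + B) :=
      nonneg_of_mul_nonneg_right (key ▸ h0) hB1
    have h3 : (2 * x - 1) * ((1 - B) * x + B) ≤ 1 + B / 8 := by linarith
    have h4' := mul_le_mul_of_nonneg_right h3 hS.le
    nlinarith [h4', hBS, hS]
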